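/- The system of two quartic polynomial equations in (x₀,x₁): (x₀-1)(1 - b P₀(x₀,x₁)) + a x₀ = 0 and (x₁-1)(9 - b P₁(x₀,x₁)) + a x₁ = 0, where P₀(x₀,x₁) = -3x₀³ + x₀²x₁ - (2/3)x₀x₁² and P₁(x₀,x₁) = 3x₀³ - 6x₀²x₁ - (1/3)x₁³, admits a solution of the form (x₀, 0) with x₀ ∈ (0,1] and a ≥ 0, if and only if b = 3(1 + a/10)³. -/
import Mathlib


theorem dimer_boundary_solution (a b : ℝ) (ha : 0 ≤ a) :
    (∃ x₀ : ℝ, 0 < x₀ ∧ x₀ ≤ 1 ∧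
        (x₀ - 1) * (1 - b * (-3 * x₀ ^ 3 + x₀ ^ 2 * 0 - (2 / 3) * x₀ * 0 ^ 2)) + a * x₀ = 0 ∧
        ((0 : ℝ) - 1) * (9 - b * (3 * x₀ ^ 3 - 6 * x₀ ^ 2 * 0 - (1 / 3) * 0 ^ 3)) + a * 0 = 0) ↔
      b = 3 * (1 + a / 10) ^ 3 := by
  have h10 : (0:ℝ) < 10 + a := by linarith
  constructor
  · rintro ⟨x₀, hpos, hle, h1, h2⟩
    have hb3 : b * x₀ ^ 3 = 3 := by nlinarith [h2]
    have hx : x₀ * (10 + a) = 10 := by nlinarith [h1, hb3]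
    have hx0 : x₀ = 10 / (10 + a) := by
      field_simp
      linarith [hx]
    rw [hx0] at hb3
    field_simp at hb3 ⊢
    nlinarith [hb3]
  · intro hb
    refine ⟨10 / (10 + a), by positivity, ?_, ?_, ?_⟩
    · rw [div_le_one h10]; linarith
    · rw [hb]; field_simp; ring
    · rw [hb]; field_simp; ring
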